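/- The unique differentiable solution v₂ of the Volterra equation v₂(t) + w² ∫₀ᵗ ds ∫₀ˢ v(s−s₁) v₂(s₁) ds₁ = c (for a constant c), where v(t) = ∫_{−2w}^{2w} e^{itλ} ρ_sc(λ) dλ, is v₂(t) = c·v(t). -/

import Mathlib

open MeasureTheory intervalIntegral

/-- The semicircle density with parameter `w`. -/
noncomputable def rhoSC (w x : ℝ) : ℝ :=
  (2 * Real.pi * w ^ 2)⁻¹ * Real.sqrt (max 0 (4 * w ^ 2 - x ^ 2))

/-- `v(t) = ∫ e^{itλ} ρ_sc(λ) dλ`, the Fourier transform of the semicircle density. -/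
noncomputable def vSC (w t : ℝ) : ℂ :=
  ∫ x in (-(2 * w))..(2 * w), Complex.exp (Complex.I * t * x) * (rhoSC w x : ℂ)

open Complex Finset Nat Real Filter

lemma rhoSC_continuous (w : ℝ) : Continuous (rhoSC w) := by
  unfold rhoSC; fun_prop

lemma rhoSC_nonneg (w x : ℝ) : 0 ≤ rhoSC w x := by
  unfold rhoSC
  have : (0:ℝ) ≤ 2 * Real.pi * w ^ 2 := by positivity
  exact mul_nonneg (inv_nonneg.2 this) (Real.sqrt_nonneg _)

/-- The moments of the semicircle density. -/
noncomputable def mSC (w : ℝ) (n : ℕ) : ℝ :=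
  ∫ x in (-(2 * w))..(2 * w), x ^ n * rhoSC w x

lemma integral_symm_odd {f : ℝ → ℝ} (hf : Continuous f)
    (hodd : ∀ x, f (-x) = - f x) (a : ℝ) : ∫ x in (-a)..a, f x = 0 := by
  have h0 : (∫ x in (0:ℝ)..a, f (-x)) = ∫ x in (-a)..(-(0:ℝ)), f x :=
    intervalIntegral.integral_comp_neg (a := 0) (b := a) (f := f)
  have h1 : (∫ x in (-a)..(0:ℝ), f x) = - ∫ x in (0:ℝ)..a, f x := by
    rw [show (-a : ℝ) = -a by rfl, ← neg_zero, ← h0]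
    simp_rw [hodd]
    simp
  have h2 : (∫ x in (-a)..(0:ℝ), f x) + (∫ x in (0:ℝ)..a, f x) = ∫ x in (-a)..a, f x :=
    intervalIntegral.integral_add_adjacent_intervals
      (hf.intervalIntegrable _ _) (hf.intervalIntegrable _ _)
  rw [← h2, h1]; ring

lemma mSC_odd (w : ℝ) (k : ℕ) : mSC w (2 * k + 1) = 0 := by
  apply integral_symm_odd
  · have := rhoSC_continuous w
    fun_prop
  · intro x
    have h1 : rhoSC w (-x) = rhoSC w x := by simp [rhoSC, neg_sq]
    have h2 : (-x) ^ (2 * k + 1) = -(x ^ (2 * k + 1)) :=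
      Odd.neg_pow ⟨k, by ring⟩ x
    rw [h1, h2]; ring

lemma catalan_rec (k : ℕ) :
    (k + 2) * catalan (k + 1) = 2 * (2 * k + 1) * catalan k := by
  have h1 := succ_mul_catalan_eq_centralBinom k
  have h2 := succ_mul_catalan_eq_centralBinom (k + 1)
  have h3 := Nat.succ_mul_centralBinom_succ k
  apply Nat.eq_of_mul_eq_mul_left (Nat.succ_pos k)
  calc (k + 1) * ((k + 2) * catalan (k + 1))
      = (k + 1 + 1) * catalan (k + 1) * (k + 1) := by ring
    _ = (k + 1) * Nat.centralBinom (k + 1) := by rw [h2]; ring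
    _ = 2 * (2 * k + 1) * Nat.centralBinom k := h3
    _ = 2 * (2 * k + 1) * ((k + 1) * catalan k) := by rw [h1]
    _ = (k + 1) * (2 * (2 * k + 1) * catalan k) := by ring

/-- `∫ sin^n` on `[-π/2, π/2]`. -/
noncomputable def sInt (n : ℕ) : ℝ :=
  ∫ θ in (-(Real.pi / 2))..(Real.pi / 2), Real.sin θ ^ n

lemma sInt_zero : sInt 0 = Real.pi := by
  simp [sInt]

lemma sInt_rec (n : ℕ) : sInt (n + 2) = (n + 1) / (n + 2) * sInt n := by
  unfold sInt
  rw [integral_sin_pow]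
  simp [Real.cos_pi_div_two]

lemma mSC_eq (w : ℝ) (hw : 0 < w) (n : ℕ) :
    mSC w n = (2 * Real.pi * w ^ 2)⁻¹ * (2 * w) ^ (n + 2) * (sInt n - sInt (n + 2)) := by
  have hsub := intervalIntegral.integral_comp_smul_deriv
      (a := -(Real.pi/2)) (b := Real.pi/2)
      (f := fun θ => 2 * w * Real.sin θ) (f' := fun θ => 2 * w * Real.cos θ)
      (g := fun x => x ^ n * rhoSC w x)
      (fun θ _ => by simpa using (Real.hasDerivAt_sin θ).const_mul (2*w))
      (by fun_prop)
      (by have := rhoSC_continuous w; fun_prop)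
  simp only [Real.sin_pi_div_two, Real.sin_neg, mul_one, mul_neg] at hsub
  rw [mSC, ← hsub]
  have hcongr : ∀ θ ∈ Set.uIcc (-(Real.pi/2)) (Real.pi/2),
      (2 * w * Real.cos θ) • ((fun x => x ^ n * rhoSC w x) ∘ (fun θ => 2 * w * Real.sin θ)) θ
        = (2 * Real.pi * w ^ 2)⁻¹ * (2 * w) ^ (n + 2) *
          (Real.sin θ ^ n - Real.sin θ ^ (n + 2)) := by
    intro θ hθ
    have hIcc : θ ∈ Set.Icc (-(Real.pi/2)) (Real.pi/2) := by
      rwa [Set.uIcc_of_le (by linarith [Real.pi_pos])] at hθ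
    have hcos : 0 ≤ Real.cos θ := Real.cos_nonneg_of_mem_Icc hIcc
    have hsc : Real.cos θ ^ 2 = 1 - Real.sin θ ^ 2 := by
      have := Real.sin_sq_add_cos_sq θ; linarith
    have key : 4 * w ^ 2 - (2 * w * Real.sin θ) ^ 2 = (2 * w * Real.cos θ) ^ 2 := by
      linear_combination (-4*w^2) * hsc
    have hrho : rhoSC w (2 * w * Real.sin θ)
        = (2 * Real.pi * w ^ 2)⁻¹ * (2 * w * Real.cos θ) := by
      rw [rhoSC, key, max_eq_right (by positivity),
        Real.sqrt_sq (by positivity)]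
    simp only [Function.comp, smul_eq_mul, hrho]
    rw [mul_pow]
    linear_combination ((2 * Real.pi * w ^ 2)⁻¹ * (2*w)^n * Real.sin θ ^ n * (4 * w^2)) * hsc
  rw [intervalIntegral.integral_congr hcongr]
  rw [intervalIntegral.integral_const_mul]
  rw [intervalIntegral.integral_sub
    ((Continuous.intervalIntegrable (by fun_prop : Continuous fun θ : ℝ => Real.sin θ ^ n)) _ _)
    ((Continuous.intervalIntegrable (by fun_prop : Continuous fun θ : ℝ => Real.sin θ ^ (n+2))) _ _)]
  rfl

lemma mSC_even (w : ℝ) (hw : 0 < w) (k : ℕ) :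
    mSC w (2 * k) = catalan k * w ^ (2 * k) := by
  induction k with
  | zero =>
    rw [mSC_eq w hw 0]
    have h2 : sInt 2 = Real.pi / 2 := by
      have := sInt_rec 0
      rw [sInt_zero] at this
      simpa using by linarith [this]
    rw [show (2*0 : ℕ) = 0 by rfl] at *
    rw [sInt_zero, h2]
    have hπ := Real.pi_ne_zero
    field_simp
    simp; ring
  | succ k ih =>
    have e1 : 2 * (k + 1) = (2 * k) + 2 := by ring
    have e2 : (2 * k) + 2 + 2 = 2 * k + 4 := by ring
    rw [e1, mSC_eq w hw ((2*k)+2)]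
    rw [mSC_eq w hw (2*k)] at ih
    have r1 : sInt (2*k + 2) = (2*↑k + 1) / (2*↑k + 2) * sInt (2*k) := by
      have := sInt_rec (2*k); push_cast at this ⊢; convert this using 3 <;> push_cast <;> ring
    have r2 : sInt (2*k + 4) = (2*↑k + 3) / (2*↑k + 4) * sInt (2*k + 2) := by
      have := sInt_rec (2*k+2); push_cast at this ⊢; convert this using 3 <;> push_cast <;> ring
    have hc : ((k:ℝ) + 2) * (catalan (k + 1) : ℝ) = 2 * (2*(k:ℝ) + 1) * (catalan k : ℝ) := by
      exact_mod_cast catalan_rec k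
    -- from ih : (2πw²)⁻¹ (2w)^{2k+2} (sInt 2k − sInt (2k+2)) = catalan k w^{2k}
    -- and sInt (2k) - sInt (2k+2) = (1/(2k+2)) sInt (2k)
    have hπ := Real.pi_ne_zero
    have hw' := hw.ne'
    have h2k2 : (0:ℝ) < 2*↑k+2 := by positivity
    have h2k4 : (0:ℝ) < 2*↑k+4 := by positivity
    have key : (2 * Real.pi * w ^ 2)⁻¹ * (2*w)^(2*k+2) * sInt (2*k)
        = (2*↑k+2) * (catalan k * w^(2*k)) := by
      have : sInt (2*k) - sInt (2*k+2) = sInt (2*k) / (2*↑k+2) := by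
        rw [r1]; field_simp; ring
      rw [this] at ih
      field_simp at ih ⊢
      linarith [ih]
    -- goal: (2πw²)⁻¹ (2w)^{2k+4} (sInt(2k+2) − sInt(2k+4)) = catalan (k+1) w^{2k+2}
    have hs : sInt (2*k+2) - sInt (2*k+4) = (2*↑k+1)/((2*↑k+2)*(2*↑k+4)) * sInt (2*k) := by
      rw [r2, r1]; field_simp; ring
    rw [show (2*k)+2+2 = 2*k+4 from by ring, hs]
    have hpow : ((2:ℝ)*w)^(2*k+4) = (2*w)^(2*k+2) * (2*w)^2 := by
      rw [← pow_add]
    have goal2 : (2 * Real.pi * w ^ 2)⁻¹ * (2*w)^(2*k+2) * (2*w)^2 *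
        ((2*↑k+1)/((2*↑k+2)*(2*↑k+4))) * sInt (2*k) = (catalan (k+1) : ℝ) * w^(2*(k+1)) := by
      have expand : (2 * Real.pi * w ^ 2)⁻¹ * (2*w)^(2*k+2) * (2*w)^2 *
          ((2*↑k+1)/((2*↑k+2)*(2*↑k+4))) * sInt (2*k)
          = ((2 * Real.pi * w ^ 2)⁻¹ * (2*w)^(2*k+2) * sInt (2*k)) * (2*w)^2 *
            ((2*↑k+1)/((2*↑k+2)*(2*↑k+4))) := by ring
      rw [expand, key]
      rw [show 2*(k+1) = 2*k + 2 from by ring, pow_add]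
      have hc' : (catalan (k+1):ℝ) = 2*(2*k+1)*catalan k/(k+2) := by
        rw [eq_div_iff (by positivity)]; linarith [hc]
      rw [hc']; field_simp; ring
    calc (2 * Real.pi * w ^ 2)⁻¹ * (2*w)^(2*k+4) *
          ((2*↑k+1)/((2*↑k+2)*(2*↑k+4)) * sInt (2*k))
        = (2 * Real.pi * w ^ 2)⁻¹ * (2*w)^(2*k+2) * (2*w)^2 *
          ((2*↑k+1)/((2*↑k+2)*(2*↑k+4))) * sInt (2*k) := by rw [hpow]; ring
      _ = (catalan (k+1) : ℝ) * w^(2*(k+1)) := goal2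

lemma mSC_zero (w : ℝ) (hw : 0 < w) : mSC w 0 = 1 := by
  have := mSC_even w hw 0
  simpa using this

lemma mSC_abs_le (w : ℝ) (hw : 0 < w) (n : ℕ) : |mSC w n| ≤ (2 * w) ^ n := by
  have hab : -(2 * w) ≤ 2 * w := by linarith
  have hcont : Continuous fun x : ℝ => x ^ n * rhoSC w x := by
    have := rhoSC_continuous w; fun_prop
  have h1 : |mSC w n| ≤ ∫ x in (-(2*w))..(2*w), |x| ^ n * |rhoSC w x| := by
    simpa [Real.norm_eq_abs, mSC] using
      intervalIntegral.norm_integral_le_integral_norm (f := fun x : ℝ => x ^ n * rhoSC w x)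
        (a := -(2*w)) (b := 2*w) (μ := volume) hab
  have h2 : (∫ x in (-(2*w))..(2*w), |x| ^ n * |rhoSC w x|)
      ≤ ∫ x in (-(2*w))..(2*w), (2*w) ^ n * rhoSC w x := by
    apply intervalIntegral.integral_mono_on hab
      ((((_root_.continuous_abs).pow n).mul (rhoSC_continuous w).abs).intervalIntegrable _ _)
      (((continuous_const.mul (rhoSC_continuous w))).intervalIntegrable _ _)
    intro x hx
    show |x| ^ n * |rhoSC w x| ≤ (2*w) ^ n * rhoSC w x
    rw [_root_.abs_of_nonneg (rhoSC_nonneg w x)]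
    apply mul_le_mul_of_nonneg_right _ (rhoSC_nonneg w x)
    apply pow_le_pow_left₀ (abs_nonneg x)
    rw [abs_le]; exact ⟨hx.1, hx.2⟩
  have h3 : (∫ x in (-(2*w))..(2*w), (2*w) ^ n * rhoSC w x) = (2*w)^n := by
    rw [intervalIntegral.integral_const_mul]
    have : (∫ x in (-(2*w))..(2*w), rhoSC w x) = mSC w 0 := by
      unfold mSC; congr 1; ext x; simp
    rw [this, mSC_zero w hw, mul_one]
  linarith

/-- Coefficients of the Cauchy square of the moment series. -/
noncomputable def bSC (w : ℝ) (n : ℕ) : ℝ :=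
  ∑ j ∈ Finset.range (n + 1), mSC w j * mSC w (n - j)

lemma bSC_abs_le (w : ℝ) (hw : 0 < w) (n : ℕ) : |bSC w n| ≤ (n + 1) * (2 * w) ^ n := by
  calc |bSC w n| ≤ ∑ j ∈ Finset.range (n + 1), |mSC w j * mSC w (n - j)| :=
        Finset.abs_sum_le_sum_abs _ _
    _ ≤ ∑ j ∈ Finset.range (n + 1), (2*w) ^ n := by
        apply Finset.sum_le_sum
        intro j hj
        have hj' : j ≤ n := by simpa [Nat.lt_succ_iff] using hj
        rw [abs_mul]
        calc |mSC w j| * |mSC w (n - j)| ≤ (2*w)^j * (2*w)^(n-j) := by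
              apply mul_le_mul (mSC_abs_le w hw j) (mSC_abs_le w hw (n-j))
                (abs_nonneg _) (by positivity)
          _ = (2*w)^n := by rw [← pow_add]; congr 1; omega
    _ = (n + 1) * (2*w)^n := by
        rw [Finset.sum_const, Finset.card_range]; push_cast; ring

lemma bSC_rec (w : ℝ) (hw : 0 < w) (n : ℕ) : w ^ 2 * bSC w n = mSC w (n + 2) := by
  rcases Nat.even_or_odd n with ⟨k, hk⟩ | ⟨k, hk⟩
  · -- n = 2k
    have hk' : n = 2 * k := by omega
    subst hk'
    have hsum : bSC w (2 * k) = ∑ i ∈ Finset.range (k + 1), mSC w (2*i) * mSC w (2*(k-i)) := by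
      unfold bSC
      have himg : ∑ j ∈ Finset.range (2*k + 1), mSC w j * mSC w (2*k - j)
          = ∑ j ∈ (Finset.range (k+1)).image (fun i => 2 * i), mSC w j * mSC w (2*k - j) := by
        apply (Finset.sum_subset ?_ ?_).symm
        · intro j hj
          simp only [Finset.mem_image, Finset.mem_range] at hj ⊢
          obtain ⟨i, hi, rfl⟩ := hj; omega
        · intro j hj hnot
          simp only [Finset.mem_image, Finset.mem_range] at hj hnot
          have hodd : Odd j := by
            rcases Nat.even_or_odd j with ⟨r, hr⟩ | ho
            · exfalso; exact hnot ⟨r, by omega, by omega⟩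
            · exact ho
          obtain ⟨r, hr⟩ := hodd
          rw [show j = 2 * r + 1 from by omega, mSC_odd]
          ring
      rw [himg, Finset.sum_image (by intro x _ y _ h; simp only at h; omega)]
      apply Finset.sum_congr rfl
      intro i hi
      simp only [Finset.mem_range] at hi
      congr 2
      omega
    rw [hsum]
    have : ∀ i ∈ Finset.range (k+1), mSC w (2*i) * mSC w (2*(k-i))
        = (catalan i * catalan (k - i) : ℕ) * w ^ (2*k) := by
      intro i hi
      simp only [Finset.mem_range] at hi
      rw [mSC_even w hw, mSC_even w hw]
      push_cast
      rw [mul_mul_mul_comm, ← pow_add]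
      congr 2
      omega
    rw [Finset.sum_congr rfl this, ← Finset.sum_mul, ← Nat.cast_sum]
    have hcat : ∑ i ∈ Finset.range (k+1), catalan i * catalan (k - i) = catalan (k + 1) := by
      rw [catalan_succ]
      exact (Fin.sum_univ_eq_sum_range (fun i => catalan i * catalan (k - i)) (k+1)).symm
    rw [hcat, show 2*k+2 = 2*(k+1) from by ring, mSC_even w hw (k+1)]
    rw [show 2*(k+1) = 2*k+2 from by ring, pow_add]
    ring
  · -- n = 2k+1 : everything vanishes
    subst hk
    have h2 : mSC w (2*k+1+2) = 0 := by
      rw [show 2*k+1+2 = 2*(k+1)+1 from by ring, mSC_odd]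
    rw [h2]
    have : bSC w (2*k+1) = 0 := by
      unfold bSC
      apply Finset.sum_eq_zero
      intro j hj
      simp only [Finset.mem_range] at hj
      rcases Nat.even_or_odd j with ⟨r, hr⟩ | ⟨r, hr⟩
      · have : 2*k+1 - j = 2*(k - r) + 1 := by omega
        rw [this, mSC_odd]; ring
      · rw [show j = 2*r+1 from by omega, mSC_odd]; ring
    rw [this]; ring

lemma vSC_continuous (w : ℝ) : Continuous (vSC w) := by
  apply intervalIntegral.continuous_parametric_intervalIntegral_of_continuous'
  have := rhoSC_continuous w
  apply Continuous.mul
  · apply Complex.continuous_exp.comp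
    fun_prop
  · fun_prop

lemma vSC_norm_le (w : ℝ) (hw : 0 < w) (t : ℝ) : ‖vSC w t‖ ≤ 1 := by
  have hab : -(2 * w) ≤ 2 * w := by linarith
  have h1 : ‖vSC w t‖ ≤ ∫ x in (-(2*w))..(2*w), ‖Complex.exp (Complex.I * t * x) * (rhoSC w x : ℂ)‖ :=
    intervalIntegral.norm_integral_le_integral_norm hab
  have h2 : ∀ x : ℝ, ‖Complex.exp (Complex.I * t * x) * (rhoSC w x : ℂ)‖ = rhoSC w x := by
    intro x
    rw [norm_mul]
    have : ‖Complex.exp (Complex.I * t * x)‖ = 1 := by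
      rw [Complex.norm_exp]
      simp
    rw [this, one_mul, Complex.norm_real, Real.norm_eq_abs,
      _root_.abs_of_nonneg (rhoSC_nonneg w x)]
  calc ‖vSC w t‖ ≤ ∫ x in (-(2*w))..(2*w), ‖Complex.exp (Complex.I * t * x) * (rhoSC w x : ℂ)‖ := h1
    _ = ∫ x in (-(2*w))..(2*w), rhoSC w x := by simp_rw [h2]
    _ = mSC w 0 := by unfold mSC; congr 1; ext x; simp
    _ = 1 := mSC_zero w hw

lemma hasSum_vSC (w : ℝ) (hw : 0 < w) (t : ℝ) :
    HasSum (fun n : ℕ => (Complex.I * t) ^ n * (mSC w n : ℂ) / n !) (vSC w t) := by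
  have hρc := rhoSC_continuous w
  have key : HasSum (fun n : ℕ => ∫ x in (-(2*w))..(2*w),
      (Complex.I * t * x) ^ n / n ! * (rhoSC w x : ℂ)) (vSC w t) := by
    apply intervalIntegral.hasSum_integral_of_dominated_convergence
      (bound := fun n x => rhoSC w x * ((|t| * (2*w)) ^ n / n !))
    · intro n
      apply Continuous.aestronglyMeasurable
      fun_prop
    · intro n
      filter_upwards with x hx
      have hxle : |x| ≤ 2 * w := by
        rw [Set.uIoc_of_le (by linarith : -(2*w) ≤ 2*w)] at hx
        rw [abs_le]; exact ⟨le_of_lt hx.1, hx.2⟩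
      rw [norm_mul, norm_div]
      simp only [norm_pow, Complex.norm_real, Real.norm_eq_abs, norm_mul, Complex.norm_I,
        Complex.norm_natCast]
      rw [_root_.abs_of_nonneg (rhoSC_nonneg w x)]
      rw [mul_comm (rhoSC w x)]
      apply mul_le_mul_of_nonneg_right _ (rhoSC_nonneg w x)
      gcongr
      nlinarith [abs_nonneg t, abs_nonneg x]
    · filter_upwards with x hx
      exact (Real.summable_pow_div_factorial (|t| * (2*w))).mul_left _
    · apply Continuous.intervalIntegrable
      have : (fun x => ∑' n : ℕ, rhoSC w x * ((|t| * (2*w)) ^ n / n !))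
          = fun x => rhoSC w x * ∑' n : ℕ, ((|t| * (2*w)) ^ n / n !) := by
        ext x; exact tsum_mul_left
      rw [this]
      fun_prop
    · filter_upwards with x hx
      have h := (NormedSpace.expSeries_div_hasSum_exp (Complex.I * t * x)).mul_right
        ((rhoSC w x : ℂ))
      rwa [← Complex.exp_eq_exp_ℂ] at h
  have heq : (fun n : ℕ => (Complex.I * t) ^ n * (mSC w n : ℂ) / n !)
      = (fun n : ℕ => ∫ x in (-(2*w))..(2*w),
          (Complex.I * t * x) ^ n / n ! * (rhoSC w x : ℂ)) := by
    funext n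
    calc (Complex.I * t) ^ n * (mSC w n : ℂ) / n !
        = (Complex.I * t) ^ n / n ! * ((mSC w n : ℝ) : ℂ) := by ring
      _ = (Complex.I * t) ^ n / n ! *
          ∫ x in (-(2*w))..(2*w), ((x ^ n * rhoSC w x : ℝ) : ℂ) := by
          rw [intervalIntegral.integral_ofReal]; rfl
      _ = ∫ x in (-(2*w))..(2*w),
          (Complex.I * t) ^ n / n ! * ((x ^ n * rhoSC w x : ℝ) : ℂ) :=
          (intervalIntegral.integral_const_mul _ _).symm
      _ = ∫ x in (-(2*w))..(2*w), (Complex.I * t * x) ^ n / n ! * (rhoSC w x : ℂ) := by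
          apply intervalIntegral.integral_congr
          intro x _
          push_cast
          ring
  rw [heq]
  exact key

lemma beta_nat (s : ℝ) : ∀ j k : ℕ,
    (∫ u in (0:ℝ)..s, (s - u) ^ j * u ^ k)
      = (j ! * k ! / (j + k + 1)! : ℝ) * s ^ (j + k + 1) := by
  intro j
  induction j with
  | zero =>
    intro k
    simp only [pow_zero, one_mul, integral_pow, Nat.zero_add, Nat.factorial_zero]
    rw [zero_pow (Nat.succ_ne_zero k)]
    have hk : ((k+1)! : ℝ) = (k+1) * k ! := by exact_mod_cast Nat.factorial_succ k
    rw [hk]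
    have h1 : ((k:ℝ) + 1) ≠ 0 := by positivity
    have h2 : ((k ! : ℝ)) ≠ 0 := by exact_mod_cast Nat.factorial_ne_zero k
    field_simp
    ring
  | succ j ih =>
    intro k
    have hu : ∀ x ∈ Set.uIcc (0:ℝ) s, HasDerivAt (fun y : ℝ => (s - y) ^ (j+1))
        (-((j:ℝ)+1) * (s - x) ^ j) x := by
      intro x _
      have h := ((hasDerivAt_id x).const_sub s).pow (j+1)
      convert h using 1 <;> try rfl
      simp only [Nat.add_sub_cancel, id_eq]
      push_cast
      ring
    have hv : ∀ x ∈ Set.uIcc (0:ℝ) s, HasDerivAt (fun y : ℝ => y ^ (k+1) / ((k:ℝ)+1))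
        ((x:ℝ) ^ k) x := by
      intro x _
      have h := (hasDerivAt_pow (k+1) x).div_const ((k:ℝ)+1)
      convert h using 1 <;> try rfl
      simp only [Nat.add_sub_cancel]
      have h1 : ((k:ℝ) + 1) ≠ 0 := by positivity
      push_cast
      field_simp
    have hInt1 : IntervalIntegrable (fun x : ℝ => -((j:ℝ)+1) * (s - x) ^ j) volume 0 s :=
      (Continuous.intervalIntegrable (by fun_prop)) _ _
    have hInt2 : IntervalIntegrable (fun x : ℝ => x ^ k) volume 0 s :=
      (Continuous.intervalIntegrable (by fun_prop)) _ _
    have IBP := intervalIntegral.integral_mul_deriv_eq_deriv_mul hu hv hInt1 hInt2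
    simp only [sub_self, zero_pow (Nat.succ_ne_zero j), zero_pow (Nat.succ_ne_zero k),
      zero_mul, zero_div, mul_zero, sub_zero, zero_sub] at IBP
    have hrw : (∫ x in (0:ℝ)..s, -((j:ℝ)+1) * (s - x) ^ j * (x ^ (k+1) / ((k:ℝ)+1)))
        = (-((j:ℝ)+1) / ((k:ℝ)+1)) * ∫ x in (0:ℝ)..s, (s - x) ^ j * x ^ (k+1) := by
      rw [← intervalIntegral.integral_const_mul]
      apply intervalIntegral.integral_congr
      intro x _
      ring
    rw [hrw, ih (k+1)] at IBP
    rw [IBP]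
    have e1 : j + (k + 1) + 1 = j + 1 + k + 1 := by omega
    rw [e1]
    have hf1 : ((j+1)! : ℝ) = (j+1) * j ! := by exact_mod_cast Nat.factorial_succ j
    have hf2 : ((k+1)! : ℝ) = (k+1) * k ! := by exact_mod_cast Nat.factorial_succ k
    rw [hf1, hf2]
    have h1 : ((k:ℝ) + 1) ≠ 0 := by positivity
    have h2 : (((j + 1 + k + 1)! : ℝ)) ≠ 0 := by
      exact_mod_cast Nat.factorial_ne_zero _
    field_simp

lemma norm_term_le (w : ℝ) (hw : 0 < w) (r : ℝ) (j : ℕ) :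
    ‖(Complex.I * (r:ℂ)) ^ j * (mSC w j : ℂ) / (j ! : ℂ)‖ ≤ (2 * w * |r|) ^ j / j ! := by
  rw [norm_div, norm_mul, norm_pow, norm_mul]
  simp only [Complex.norm_I, Complex.norm_real, Real.norm_eq_abs, one_mul,
    Complex.norm_natCast]
  have hj : (0:ℝ) < j ! := by exact_mod_cast Nat.factorial_pos j
  have hb : |r| ^ j * |mSC w j| ≤ (2 * w * |r|) ^ j := by
    calc |r| ^ j * |mSC w j| ≤ |r| ^ j * (2*w) ^ j :=
          mul_le_mul_of_nonneg_left (mSC_abs_le w hw j) (by positivity)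
      _ = (2 * w * |r|) ^ j := by rw [← mul_pow]; ring_nf
  gcongr

lemma summable_norm_term (w : ℝ) (hw : 0 < w) (r : ℝ) :
    Summable fun j : ℕ => ‖(Complex.I * (r:ℂ)) ^ j * (mSC w j : ℂ) / (j ! : ℂ)‖ :=
  Summable.of_nonneg_of_le (fun _ => norm_nonneg _) (norm_term_le w hw r)
    (Real.summable_pow_div_factorial (2 * w * |r|))

lemma hasSum_conv (w : ℝ) (hw : 0 < w) (s : ℝ) :
    HasSum (fun n : ℕ => Complex.I ^ n * (bSC w n : ℂ) * (s:ℂ) ^ (n+1) / ((n+1)! : ℂ))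
      (∫ u in (0:ℝ)..s, vSC w (s - u) * vSC w u) := by
  set F : ℕ → ℝ → ℂ := fun n u => ∑ j ∈ Finset.range (n+1),
    ((Complex.I * ((s - u : ℝ):ℂ)) ^ j * (mSC w j : ℂ) / (j ! : ℂ)) *
      ((Complex.I * (u:ℂ)) ^ (n - j) * (mSC w (n - j) : ℂ) / ((n - j)! : ℂ)) with hF
  have key : HasSum (fun n => ∫ u in (0:ℝ)..s, F n u)
      (∫ u in (0:ℝ)..s, vSC w (s - u) * vSC w u) := by
    apply intervalIntegral.hasSum_integral_of_dominated_convergence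
      (bound := fun n _ => (4 * w * |s|) ^ n / n !)
    · intro n
      apply Continuous.aestronglyMeasurable
      apply continuous_finset_sum
      intro j _
      fun_prop
    · intro n
      filter_upwards with u hu
      rw [Set.mem_uIoc] at hu
      have hu1 : |u| ≤ |s| := by
        rcases hu with ⟨h1, h2⟩ | ⟨h1, h2⟩ <;> rw [abs_le] <;>
          constructor <;> nlinarith [le_abs_self s, neg_abs_le s]
      have hu2 : |s - u| ≤ |s| := by
        rcases hu with ⟨h1, h2⟩ | ⟨h1, h2⟩ <;> rw [abs_le] <;>
          constructor <;> nlinarith [le_abs_self s, neg_abs_le s]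
      have hterm : ∀ j ∈ Finset.range (n+1),
          ‖((Complex.I * ((s - u : ℝ):ℂ)) ^ j * (mSC w j : ℂ) / (j ! : ℂ)) *
            ((Complex.I * (u:ℂ)) ^ (n - j) * (mSC w (n - j) : ℂ) / ((n - j)! : ℂ))‖
          ≤ (2 * w * |s|) ^ n * (n.choose j : ℝ) / n ! := by
        intro j hj
        rw [Finset.mem_range, Nat.lt_succ_iff] at hj
        obtain ⟨k, rfl⟩ : ∃ k, n = j + k := ⟨n - j, by omega⟩
        have hnj : j + k - j = k := by omega
        rw [hnj, norm_mul]
        have e1 : ‖(Complex.I * ((s - u : ℝ):ℂ)) ^ j * (mSC w j : ℂ) / (j ! : ℂ)‖ *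
              ‖(Complex.I * (u:ℂ)) ^ k * (mSC w k : ℂ) / (k ! : ℂ)‖
            ≤ ((2 * w * |s - u|) ^ j / j !) * ((2 * w * |u|) ^ k / k !) :=
          mul_le_mul (norm_term_le w hw _ j) (norm_term_le w hw _ k)
            (norm_nonneg _) (by positivity)
        have e2 : ((2 * w * |s - u|) ^ j / j !) * ((2 * w * |u|) ^ k / k !)
            ≤ ((2 * w * |s|) ^ j / j !) * ((2 * w * |s|) ^ k / k !) := by
          gcongr <;> first | exact hu1 | exact hu2
        have e3 : ((2 * w * |s|) ^ j / j !) * ((2 * w * |s|) ^ k / k !)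
            = (2 * w * |s|) ^ (j + k) * ((j+k).choose j : ℝ) / (j+k)! := by
          rw [Nat.cast_choose (K := ℝ) (by omega : j ≤ j + k), pow_add]
          have h1 : ((j ! : ℝ)) ≠ 0 := by exact_mod_cast Nat.factorial_ne_zero j
          have h2 : ((k ! : ℝ)) ≠ 0 := by exact_mod_cast Nat.factorial_ne_zero k
          have h3 : (((j+k)! : ℝ)) ≠ 0 := by exact_mod_cast Nat.factorial_ne_zero _
          have h4 : j + k - j = k := by omega
          rw [h4]
          field_simp
        calc _ ≤ _ := e1
          _ ≤ _ := e2
          _ = _ := e3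
      calc ‖F n u‖ ≤ ∑ j ∈ Finset.range (n+1),
            ‖((Complex.I * ((s - u : ℝ):ℂ)) ^ j * (mSC w j : ℂ) / (j ! : ℂ)) *
              ((Complex.I * (u:ℂ)) ^ (n - j) * (mSC w (n - j) : ℂ) / ((n - j)! : ℂ))‖ :=
            norm_sum_le _ _
        _ ≤ ∑ j ∈ Finset.range (n+1), (2 * w * |s|) ^ n * (n.choose j : ℝ) / n ! :=
            Finset.sum_le_sum hterm
        _ = (4 * w * |s|) ^ n / n ! := by
            rw [← Finset.sum_div, ← Finset.mul_sum]
            have hch : ∑ j ∈ Finset.range (n+1), (n.choose j : ℝ) = (2:ℝ) ^ n := by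
              exact_mod_cast Nat.sum_range_choose n
            rw [hch, show (4:ℝ) * w * |s| = 2 * (2 * w * |s|) from by ring,
              mul_pow 2 (2*w*|s|), mul_pow (2*w) |s|]
            ring
    · filter_upwards with u hu
      exact Real.summable_pow_div_factorial (4 * w * |s|)
    · exact intervalIntegrable_const
    · filter_upwards with u hu
      have h1 := hasSum_vSC w hw (s - u)
      have h2 := hasSum_vSC w hw u
      have h := hasSum_sum_range_mul_of_summable_norm
        (summable_norm_term w hw (s - u)) (summable_norm_term w hw u)
      rwa [h1.tsum_eq, h2.tsum_eq] at h
  have heq : (fun n => ∫ u in (0:ℝ)..s, F n u)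
      = fun n : ℕ => Complex.I ^ n * (bSC w n : ℂ) * (s:ℂ) ^ (n+1) / ((n+1)! : ℂ) := by
    funext n
    rw [hF]
    rw [intervalIntegral.integral_finset_sum]
    swap
    · intro j _
      apply (Continuous.intervalIntegrable ?_)
      fun_prop
    have hterm : ∀ j ∈ Finset.range (n+1),
        (∫ u in (0:ℝ)..s, ((Complex.I * ((s - u : ℝ):ℂ)) ^ j * (mSC w j : ℂ) / (j ! : ℂ)) *
          ((Complex.I * (u:ℂ)) ^ (n - j) * (mSC w (n - j) : ℂ) / ((n - j)! : ℂ)))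
        = ((mSC w j * mSC w (n - j) : ℝ) : ℂ) *
            (Complex.I ^ n * (s:ℂ) ^ (n+1) / ((n+1)! : ℂ)) := by
      intro j hj
      rw [Finset.mem_range, Nat.lt_succ_iff] at hj
      obtain ⟨k, rfl⟩ : ∃ k, n = j + k := ⟨n - j, by omega⟩
      have hnj : j + k - j = k := by omega
      rw [hnj]
      have hcongr : ∀ u ∈ Set.uIcc (0:ℝ) s,
          ((Complex.I * ((s - u : ℝ):ℂ)) ^ j * (mSC w j : ℂ) / (j ! : ℂ)) *
            ((Complex.I * (u:ℂ)) ^ k * (mSC w k : ℂ) / (k ! : ℂ))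
          = (Complex.I ^ (j+k) * (mSC w j : ℂ) * (mSC w k : ℂ) / ((j ! : ℂ) * (k ! : ℂ))) *
              (((s - u) ^ j * u ^ k : ℝ) : ℂ) := by
        intro u _
        rw [pow_add, mul_pow, mul_pow]
        push_cast
        ring
      rw [intervalIntegral.integral_congr hcongr, intervalIntegral.integral_const_mul,
        intervalIntegral.integral_ofReal, beta_nat s j k]
      have h1' : ((j ! : ℂ)) ≠ 0 := by exact_mod_cast Nat.factorial_ne_zero j
      have h2' : ((k ! : ℂ)) ≠ 0 := by exact_mod_cast Nat.factorial_ne_zero k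
      have h3' : (((j+k+1)! : ℂ)) ≠ 0 := by exact_mod_cast Nat.factorial_ne_zero _
      push_cast
      field_simp
    rw [Finset.sum_congr rfl hterm, ← Finset.sum_mul]
    have hb : (∑ j ∈ Finset.range (n+1), ((mSC w j * mSC w (n-j) : ℝ) : ℂ))
        = ((bSC w n : ℝ) : ℂ) := by rw [bSC]; push_cast; ring
    rw [hb]
    ring
  rwa [heq] at key

lemma hasSum_double (w : ℝ) (hw : 0 < w) (t : ℝ) :
    HasSum (fun n : ℕ => Complex.I ^ n * (bSC w n : ℂ) * (t:ℂ) ^ (n+2) / ((n+2)! : ℂ))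
      (∫ s in (0:ℝ)..t, ∫ u in (0:ℝ)..s, vSC w (s - u) * vSC w u) := by
  have key : HasSum
      (fun n => ∫ s in (0:ℝ)..t, Complex.I ^ n * (bSC w n : ℂ) * (s:ℂ) ^ (n+1) / ((n+1)! : ℂ))
      (∫ s in (0:ℝ)..t, ∫ u in (0:ℝ)..s, vSC w (s - u) * vSC w u) := by
    apply intervalIntegral.hasSum_integral_of_dominated_convergence
      (bound := fun n _ => |t| * (2 * w * |t|) ^ n / n !)
    · intro n
      apply Continuous.aestronglyMeasurable
      fun_prop
    · intro n
      filter_upwards with s hs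
      rw [Set.mem_uIoc] at hs
      have hs1 : |s| ≤ |t| := by
        rcases hs with ⟨h1, h2⟩ | ⟨h1, h2⟩ <;> rw [abs_le] <;>
          constructor <;> nlinarith [le_abs_self t, neg_abs_le t]
      rw [norm_div, norm_mul, norm_mul, norm_pow, norm_pow]
      simp only [Complex.norm_I, Complex.norm_real, Real.norm_eq_abs, one_pow, one_mul,
        Complex.norm_natCast]
      have hfac : ((n+1)! : ℝ) = (n+1) * n ! := by exact_mod_cast Nat.factorial_succ n
      have hb := bSC_abs_le w hw n
      have hfn : (0:ℝ) < n ! := by exact_mod_cast Nat.factorial_pos n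
      have hbound : |bSC w n| * |s| ^ (n+1) ≤ ((n:ℝ)+1) * (2*w)^n * (|t| * |t|^n) := by
        calc |bSC w n| * |s| ^ (n+1) ≤ (((n:ℝ)+1) * (2*w)^n) * |t| ^ (n+1) := by
              apply mul_le_mul (by exact_mod_cast hb) (pow_le_pow_left₀ (abs_nonneg s) hs1 _)
                (by positivity) (by positivity)
          _ = ((n:ℝ)+1) * (2*w)^n * (|t| * |t|^n) := by rw [pow_succ]; ring
      rw [hfac]
      rw [div_le_div_iff₀ (by positivity) (by positivity)]
      calc |bSC w n| * |s| ^ (n+1) * (n !)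
            ≤ ((n:ℝ)+1) * (2*w)^n * (|t| * |t|^n) * n ! :=
            mul_le_mul_of_nonneg_right hbound (le_of_lt hfn)
        _ = |t| * (2*w*|t|)^n * ((↑n+1) * ↑n !) := by rw [mul_pow]; ring
    · filter_upwards with s hs
      simpa [mul_div_assoc] using
        (Real.summable_pow_div_factorial (2 * w * |t|)).mul_left |t|
    · exact intervalIntegrable_const
    · filter_upwards with s hs
      exact hasSum_conv w hw s
  have heq : (fun n => ∫ s in (0:ℝ)..t,
        Complex.I ^ n * (bSC w n : ℂ) * (s:ℂ) ^ (n+1) / ((n+1)! : ℂ))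
      = fun n : ℕ => Complex.I ^ n * (bSC w n : ℂ) * (t:ℂ) ^ (n+2) / ((n+2)! : ℂ) := by
    funext n
    have hcongr : ∀ s ∈ Set.uIcc (0:ℝ) t,
        Complex.I ^ n * (bSC w n : ℂ) * (s:ℂ) ^ (n+1) / ((n+1)! : ℂ)
        = (Complex.I ^ n * (bSC w n : ℂ) / ((n+1)! : ℂ)) * ((s ^ (n+1) : ℝ) : ℂ) := by
      intro s _
      push_cast
      ring
    rw [intervalIntegral.integral_congr hcongr, intervalIntegral.integral_const_mul,
      intervalIntegral.integral_ofReal, integral_pow]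
    rw [zero_pow (Nat.succ_ne_zero (n+1))]
    have hfac : ((n+2)! : ℂ) = (n+2) * (n+1)! := by exact_mod_cast Nat.factorial_succ (n+1)
    have h1 : (((n+1)! : ℂ)) ≠ 0 := by exact_mod_cast Nat.factorial_ne_zero (n+1)
    have h2 : ((n:ℂ) + 2) ≠ 0 := by
      exact_mod_cast (by positivity : ((n:ℝ) + 2) ≠ 0)
    rw [hfac]
    have h2' : ((n:ℂ) + 1 + 1) ≠ 0 := by
      exact_mod_cast (by positivity : ((n:ℝ) + 1 + 1) ≠ 0)
    push_cast
    field_simp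
    ring_nf
  rwa [heq] at key

lemma fixed_point (w : ℝ) (hw : 0 < w) (t : ℝ) :
    vSC w t + (w:ℂ) ^ 2 * ∫ s in (0:ℝ)..t, ∫ u in (0:ℝ)..s, vSC w (s - u) * vSC w u = 1 := by
  have h1 := hasSum_vSC w hw t
  have h2 := (hasSum_double w hw t).mul_left ((w:ℂ) ^ 2)
  have hterm : (fun n : ℕ =>
        (w:ℂ)^2 * (Complex.I ^ n * (bSC w n : ℂ) * (t:ℂ) ^ (n+2) / ((n+2)! : ℂ)))
      = fun n : ℕ => -((Complex.I * t) ^ (n+2) * (mSC w (n+2) : ℂ) / ((n+2)! : ℂ)) := by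
    funext n
    have hb : ((w:ℂ))^2 * (bSC w n : ℂ) = (mSC w (n+2) : ℂ) := by
      exact_mod_cast congrArg (fun x : ℝ => (x : ℂ)) (bSC_rec w hw n)
    have hI : (Complex.I * t) ^ (n+2) = - (Complex.I ^ n * (t:ℂ) ^ (n+2)) := by
      rw [mul_pow, pow_add]
      simp [Complex.I_sq]
    rw [hI, ← hb]
    ring
  rw [hterm] at h2
  have h3 : HasSum (fun n : ℕ => (Complex.I * t) ^ (n+2) * (mSC w (n+2) : ℂ) / ((n+2)! : ℂ))
      (vSC w t - ∑ i ∈ Finset.range 2, (Complex.I * t) ^ i * (mSC w i : ℂ) / (i ! : ℂ)) :=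
    (hasSum_nat_add_iff' 2).mpr h1
  have h4 := h3.neg
  have huniq := h2.unique h4
  have hm1 : mSC w 1 = 0 := by simpa using mSC_odd w 0
  have hsum2 : (∑ i ∈ Finset.range 2, (Complex.I * t) ^ i * (mSC w i : ℂ) / (i ! : ℂ)) = 1 := by
    rw [Finset.sum_range_succ, Finset.sum_range_one]
    rw [mSC_zero w hw, hm1]
    simp
  rw [hsum2] at huniq
  linear_combination huniq

lemma conv_cont (w : ℝ) {h : ℝ → ℂ} (hh : Continuous h) :
    Continuous fun σ : ℝ => ∫ τ in (0:ℝ)..σ, vSC w (σ - τ) * h τ := by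
  have hc : Continuous fun p : ℝ × ℝ => ∫ τ in (0:ℝ)..p.2, vSC w (p.1 - τ) * h τ := by
    apply intervalIntegral.continuous_parametric_primitive_of_continuous
      (f := fun (x : ℝ) (τ : ℝ) => vSC w (x - τ) * h τ)
    have := vSC_continuous w
    fun_prop
  exact hc.comp₂ continuous_id continuous_id

/-- The unique differentiable solution of the Volterra equation
`v₂(t) + w² ∫₀ᵗ∫₀ˢ v(s−s₁) v₂(s₁) ds₁ ds = c` is `v₂ = c·v`. -/
theorem volterra_semicircle_solution (w : ℝ) (hw : 0 < w) (c : ℂ) (v₂ : ℝ → ℂ)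
    (hd : DifferentiableOn ℝ v₂ (Set.Ici 0))
    (heq : ∀ t ≥ (0:ℝ),
      v₂ t + (w : ℂ) ^ 2 *
        ∫ s in (0:ℝ)..t, ∫ s₁ in (0:ℝ)..s, vSC w (s - s₁) * v₂ s₁ = c) :
    ∀ t ≥ (0:ℝ), v₂ t = c * vSC w t := by
  set g : ℝ → ℂ := fun s => v₂ (max s 0) with hgdef
  have hgc : Continuous g :=
    hd.continuousOn.comp_continuous (continuous_id.max continuous_const)
      (fun x => Set.mem_Ici.mpr (le_max_right _ _))
  have hg_eq : ∀ s : ℝ, 0 ≤ s → g s = v₂ s := fun s hs => by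
    simp only [hgdef, max_eq_left hs]
  set u : ℝ → ℂ := fun s => g s - c * vSC w s with hudef
  have huc : Continuous u := hgc.sub (continuous_const.mul (vSC_continuous w))
  -- the homogeneous equation for u
  have hueq : ∀ s : ℝ, 0 ≤ s →
      u s = -((w:ℂ)^2) * ∫ σ in (0:ℝ)..s, ∫ τ in (0:ℝ)..σ, vSC w (σ - τ) * u τ := by
    intro s hs
    have hA := heq s hs
    -- replace v₂ by g inside the double integral
    have hrepl : (∫ σ in (0:ℝ)..s, ∫ τ in (0:ℝ)..σ, vSC w (σ - τ) * v₂ τ)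
        = ∫ σ in (0:ℝ)..s, ∫ τ in (0:ℝ)..σ, vSC w (σ - τ) * g τ := by
      apply intervalIntegral.integral_congr
      intro σ hσ
      rw [Set.uIcc_of_le hs] at hσ
      apply intervalIntegral.integral_congr
      intro τ hτ
      rw [Set.uIcc_of_le hσ.1] at hτ
      show vSC w (σ - τ) * v₂ τ = vSC w (σ - τ) * g τ
      rw [hg_eq τ hτ.1]
    rw [hrepl, ← hg_eq s hs] at hA
    -- equation for c • vSC
    have hB : g s - u s + (w:ℂ)^2 *
        ∫ σ in (0:ℝ)..s, ∫ τ in (0:ℝ)..σ, vSC w (σ - τ) * (g τ - u τ) = c := by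
      have hfp := fixed_point w hw s
      have h1 : ∀ σ : ℝ, (∫ τ in (0:ℝ)..σ, vSC w (σ - τ) * (g τ - u τ))
          = c * ∫ τ in (0:ℝ)..σ, vSC w (σ - τ) * vSC w τ := by
        intro σ
        rw [← intervalIntegral.integral_const_mul]
        apply intervalIntegral.integral_congr
        intro τ _
        simp only [hudef]
        ring
      have h2 : (∫ σ in (0:ℝ)..s, ∫ τ in (0:ℝ)..σ, vSC w (σ - τ) * (g τ - u τ))
          = c * ∫ σ in (0:ℝ)..s, ∫ τ in (0:ℝ)..σ, vSC w (σ - τ) * vSC w τ := by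
        rw [← intervalIntegral.integral_const_mul]
        apply intervalIntegral.integral_congr
        intro σ _
        exact h1 σ
      rw [h2]
      have hgu : g s - u s = c * vSC w s := by simp only [hudef]; ring
      rw [hgu]
      linear_combination c * hfp
    -- subtract
    have hsplit : (∫ σ in (0:ℝ)..s, ∫ τ in (0:ℝ)..σ, vSC w (σ - τ) * g τ)
        - (∫ σ in (0:ℝ)..s, ∫ τ in (0:ℝ)..σ, vSC w (σ - τ) * (g τ - u τ))
        = ∫ σ in (0:ℝ)..s, ∫ τ in (0:ℝ)..σ, vSC w (σ - τ) * u τ := by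
      rw [← intervalIntegral.integral_sub
        ((conv_cont w hgc).intervalIntegrable _ _)
        ((conv_cont w (h := fun τ => g τ - u τ) (hgc.sub huc)).intervalIntegrable _ _)]
      apply intervalIntegral.integral_congr
      intro σ _
      show (∫ τ in (0:ℝ)..σ, vSC w (σ - τ) * g τ)
          - (∫ τ in (0:ℝ)..σ, vSC w (σ - τ) * (g τ - u τ))
          = ∫ τ in (0:ℝ)..σ, vSC w (σ - τ) * u τ
      rw [← intervalIntegral.integral_sub
        ((Continuous.intervalIntegrable
          (by have := vSC_continuous w; fun_prop :
            Continuous fun τ : ℝ => vSC w (σ - τ) * g τ)) _ _)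
        ((Continuous.intervalIntegrable
          (by have := vSC_continuous w; fun_prop :
            Continuous fun τ : ℝ => vSC w (σ - τ) * (g τ - u τ))) _ _)]
      apply intervalIntegral.integral_congr
      intro τ _
      show vSC w (σ - τ) * g τ - vSC w (σ - τ) * (g τ - u τ) = vSC w (σ - τ) * u τ
      ring
    linear_combination hA - hB - (w:ℂ)^2 * hsplit
  -- Gronwall-type iteration
  intro t ht
  obtain ⟨A, hA⟩ := (isCompact_Icc (a := (0:ℝ)) (b := t)).exists_bound_of_continuousOn
    huc.continuousOn
  set A' : ℝ := max A 0 with hA'def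
  have hA'0 : 0 ≤ A' := le_max_right _ _
  have hA' : ∀ x ∈ Set.Icc (0:ℝ) t, ‖u x‖ ≤ A' := fun x hx =>
    (hA x hx).trans (le_max_left _ _)
  have claim : ∀ n : ℕ, ∀ s ∈ Set.Icc (0:ℝ) t, ‖u s‖ ≤ A' * (w*s)^(2*n) / (2*n)! := by
    intro n
    induction n with
    | zero => intro s hs; simpa using hA' s hs
    | succ n ih =>
      intro s hs
      have hs0 : (0:ℝ) ≤ s := hs.1
      have hst : s ≤ t := hs.2
      have hinner : ∀ σ ∈ Set.Icc (0:ℝ) s,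
          ‖∫ τ in (0:ℝ)..σ, vSC w (σ - τ) * u τ‖
            ≤ A' * w^(2*n) * σ^(2*n+1) / ((2*n)! * (2*n+1)) := by
        intro σ hσ
        have hσ0 := hσ.1
        calc ‖∫ τ in (0:ℝ)..σ, vSC w (σ - τ) * u τ‖
            ≤ ∫ τ in (0:ℝ)..σ, ‖vSC w (σ - τ) * u τ‖ :=
              intervalIntegral.norm_integral_le_integral_norm hσ0
          _ ≤ ∫ τ in (0:ℝ)..σ, A' * w^(2*n) * τ^(2*n) / (2*n)! := by
              apply intervalIntegral.integral_mono_on hσ0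
              · exact (((vSC_continuous w).comp (continuous_const.sub continuous_id)).mul
                  huc).norm.intervalIntegrable _ _
              · exact (Continuous.intervalIntegrable (by fun_prop)) _ _
              intro τ hτ
              rw [norm_mul]
              have hτt : τ ∈ Set.Icc (0:ℝ) t := ⟨hτ.1, le_trans (le_trans hτ.2 hσ.2) hst⟩
              calc ‖vSC w (σ - τ)‖ * ‖u τ‖ ≤ 1 * (A' * (w*τ)^(2*n) / (2*n)!) :=
                    mul_le_mul (vSC_norm_le w hw _) (ih τ hτt) (norm_nonneg _) zero_le_one
                _ = A' * w^(2*n) * τ^(2*n) / (2*n)! := by rw [one_mul, mul_pow]; ring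
          _ = A' * w^(2*n) * σ^(2*n+1) / ((2*n)! * (2*n+1)) := by
              rw [intervalIntegral.integral_div, intervalIntegral.integral_const_mul,
                integral_pow, zero_pow (Nat.succ_ne_zero (2*n))]
              push_cast
              field_simp
              ring_nf
      rw [hueq s hs0]
      rw [norm_mul, norm_neg, norm_pow, Complex.norm_real, Real.norm_eq_abs,
        _root_.abs_of_pos hw]
      calc w^2 * ‖∫ σ in (0:ℝ)..s, ∫ τ in (0:ℝ)..σ, vSC w (σ - τ) * u τ‖
          ≤ w^2 * ∫ σ in (0:ℝ)..s, ‖∫ τ in (0:ℝ)..σ, vSC w (σ - τ) * u τ‖ := by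
            apply mul_le_mul_of_nonneg_left
              (intervalIntegral.norm_integral_le_integral_norm hs0) (by positivity)
        _ ≤ w^2 * ∫ σ in (0:ℝ)..s, A' * w^(2*n) * σ^(2*n+1) / ((2*n)! * (2*n+1)) := by
            apply mul_le_mul_of_nonneg_left _ (by positivity)
            apply intervalIntegral.integral_mono_on hs0
            · exact (conv_cont w huc).norm.intervalIntegrable _ _
            · exact (Continuous.intervalIntegrable (by fun_prop)) _ _
            exact hinner
        _ = A' * (w*s)^(2*(n+1)) / (2*(n+1))! := by
            rw [intervalIntegral.integral_div, intervalIntegral.integral_const_mul,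
              integral_pow, zero_pow (Nat.succ_ne_zero (2*n+1))]
            have hfac : ((2*(n+1))! : ℝ) = (2*n+2) * ((2*n+1) * (2*n)!) := by
              rw [show 2*(n+1) = (2*n+1)+1 from by ring, Nat.factorial_succ,
                show 2*n+1 = (2*n)+1 from rfl, Nat.factorial_succ]
              push_cast
              ring
            rw [hfac, mul_pow]
            have h1 : ((2*n)! : ℝ) ≠ 0 := by exact_mod_cast Nat.factorial_ne_zero _
            have h2 : ((2:ℝ)*n+1) ≠ 0 := by positivity
            have h3 : ((2:ℝ)*n+2) ≠ 0 := by positivity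
            push_cast
            field_simp
            ring
      done
  -- conclude : ‖u t‖ = 0
  have htt : t ∈ Set.Icc (0:ℝ) t := ⟨ht, le_refl t⟩
  have hlim : Tendsto (fun n : ℕ => A' * (w*t)^(2*n) / (2*n)!) atTop (nhds 0) := by
    have h0 : Tendsto (fun m : ℕ => A' * ((w*t)^m / m !)) atTop (nhds (A' * 0)) :=
      (FloorSemiring.tendsto_pow_div_factorial_atTop (K := ℝ) (w*t)).const_mul A'
    rw [mul_zero] at h0
    have h2 : Tendsto (fun n : ℕ => 2*n) atTop atTop :=
      Filter.tendsto_atTop_atTop.mpr (fun b => ⟨b, fun a ha => by omega⟩)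
    have := h0.comp h2
    simpa [Function.comp_def, mul_div_assoc] using this
  have hle : ‖u t‖ ≤ 0 :=
    ge_of_tendsto' hlim (fun n => claim n t htt)
  have hu0 : u t = 0 := by
    rw [← norm_eq_zero]
    exact le_antisymm hle (norm_nonneg _)
  have := sub_eq_zero.mp hu0
  rw [← hg_eq t ht]
  exact this
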